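/- For the trace τ on K_N with τ(1) = τ_0, τ(e) = τ_0/2 + iτ_1, τ(α_i) = 0 and an element a = λ1 + μe + Σ a^i α_i, one has τ(a* a) = (|λ|² + Re(λ μ̄))τ_0 + 2 Im(λ μ̄) τ_1. -/

import Mathlib

open Complex BigOperators

/-- The generalized Kronecker algebra `K_N`: elements `λ•1 + μ•e + ∑ aⁱ αᵢ`
represented by their coefficients. -/
@[ext] structure Kron (N : ℕ) where
  lam : ℂ
  mu : ℂ
  al : Fin N → ℂ

namespace Kron

variable {N : ℕ}

instance : Zero (Kron N) := ⟨⟨0, 0, fun _ => 0⟩⟩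
instance : One (Kron N) := ⟨⟨1, 0, fun _ => 0⟩⟩
instance : Add (Kron N) := ⟨fun x y => ⟨x.lam + y.lam, x.mu + y.mu, fun i => x.al i + y.al i⟩⟩
instance : Neg (Kron N) := ⟨fun x => ⟨-x.lam, -x.mu, fun i => -x.al i⟩⟩
instance : Mul (Kron N) :=
  ⟨fun x y => ⟨x.lam * y.lam, x.lam * y.mu + y.lam * x.mu + x.mu * y.mu,
    fun i => (x.lam + x.mu) * y.al i + y.lam * x.al i⟩⟩
instance : SMul ℂ (Kron N) := ⟨fun c x => ⟨c * x.lam, c * x.mu, fun i => c * x.al i⟩⟩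

@[simp] lemma mk_lam (l m : ℂ) (v : Fin N → ℂ) : (Kron.mk l m v).lam = l := rfl
@[simp] lemma mk_mu (l m : ℂ) (v : Fin N → ℂ) : (Kron.mk l m v).mu = m := rfl
@[simp] lemma mk_al (l m : ℂ) (v : Fin N → ℂ) (i : Fin N) : (Kron.mk l m v).al i = v i := rfl
@[simp] lemma zero_lam : (0 : Kron N).lam = 0 := rfl
@[simp] lemma zero_mu : (0 : Kron N).mu = 0 := rfl
@[simp] lemma zero_al (i : Fin N) : (0 : Kron N).al i = 0 := rfl
@[simp] lemma one_lam : (1 : Kron N).lam = 1 := rfl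
@[simp] lemma one_mu : (1 : Kron N).mu = 0 := rfl
@[simp] lemma one_al (i : Fin N) : (1 : Kron N).al i = 0 := rfl
@[simp] lemma add_lam (x y : Kron N) : (x + y).lam = x.lam + y.lam := rfl
@[simp] lemma add_mu (x y : Kron N) : (x + y).mu = x.mu + y.mu := rfl
@[simp] lemma add_al (x y : Kron N) (i : Fin N) : (x + y).al i = x.al i + y.al i := rfl
@[simp] lemma neg_lam (x : Kron N) : (-x).lam = -x.lam := rfl
@[simp] lemma neg_mu (x : Kron N) : (-x).mu = -x.mu := rfl
@[simp] lemma neg_al (x : Kron N) (i : Fin N) : (-x).al i = -x.al i := rfl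
@[simp] lemma mul_lam (x y : Kron N) : (x * y).lam = x.lam * y.lam := rfl
@[simp] lemma mul_mu (x y : Kron N) :
    (x * y).mu = x.lam * y.mu + y.lam * x.mu + x.mu * y.mu := rfl
@[simp] lemma mul_al (x y : Kron N) (i : Fin N) :
    (x * y).al i = (x.lam + x.mu) * y.al i + y.lam * x.al i := rfl
@[simp] lemma smul_lam (c : ℂ) (x : Kron N) : (c • x).lam = c * x.lam := rfl
@[simp] lemma smul_mu (c : ℂ) (x : Kron N) : (c • x).mu = c * x.mu := rfl
@[simp] lemma smul_al (c : ℂ) (x : Kron N) (i : Fin N) : (c • x).al i = c * x.al i := rfl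

instance : AddCommGroup (Kron N) where
  add_assoc := by intros; ext <;> simp <;> ring
  zero_add := by intros; ext <;> simp
  add_zero := by intros; ext <;> simp
  add_comm := by intros; ext <;> simp <;> ring
  neg_add_cancel := by intros; ext <;> simp
  nsmul := nsmulRec
  zsmul := zsmulRec

instance : Ring (Kron N) :=
  { (inferInstance : AddCommGroup (Kron N)) with
    left_distrib := by intros; ext <;> simp <;> ring
    right_distrib := by intros; ext <;> simp <;> ring
    zero_mul := by intros; ext <;> simp
    mul_zero := by intros; ext <;> simp
    mul_assoc := by intros; ext <;> simp <;> ring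
    one_mul := by intros; ext <;> simp
    mul_one := by intros; ext <;> simp }

instance : Module ℂ (Kron N) where
  one_smul := by intros; ext <;> simp
  mul_smul := by intros; ext <;> simp <;> ring
  smul_zero := by intros; ext <;> simp
  smul_add := by intros; ext <;> simp <;> ring
  add_smul := by intros; ext <;> simp <;> ring
  zero_smul := by intros; ext <;> simp

instance : Algebra ℂ (Kron N) :=
  Algebra.ofModule (fun _ _ _ => by ext <;> simp <;> ring)
    (fun _ _ _ => by ext <;> simp <;> ring)

/-- The idempotent generator `e`. -/
def e : Kron N := ⟨0, 1, fun _ => 0⟩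

/-- The arrow generators `α i`. -/
def α (i : Fin N) : Kron N := ⟨0, 0, fun j => if j = i then 1 else 0⟩

@[simp] lemma e_lam : (e : Kron N).lam = 0 := rfl
@[simp] lemma e_mu : (e : Kron N).mu = 1 := rfl
@[simp] lemma e_al (i : Fin N) : (e : Kron N).al i = 0 := rfl
@[simp] lemma α_lam (i : Fin N) : (α i : Kron N).lam = 0 := rfl
@[simp] lemma α_mu (i : Fin N) : (α i : Kron N).mu = 0 := rfl
@[simp] lemma α_al (i j : Fin N) : (α i : Kron N).al j = if j = i then 1 else 0 := rfl

/-- The `*`-structure: `(λ1 + μe + aⁱαᵢ)* = (λ̄+μ̄)1 − μ̄e + āⁱαᵢ`. -/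
instance : Star (Kron N) :=
  ⟨fun x => ⟨starRingEnd ℂ x.lam + starRingEnd ℂ x.mu, -(starRingEnd ℂ x.mu),
    fun i => starRingEnd ℂ (x.al i)⟩⟩

@[simp] lemma star_lam (x : Kron N) :
    (star x).lam = starRingEnd ℂ x.lam + starRingEnd ℂ x.mu := rfl
@[simp] lemma star_mu (x : Kron N) : (star x).mu = -(starRingEnd ℂ x.mu) := rfl
@[simp] lemma star_al (x : Kron N) (i : Fin N) : (star x).al i = starRingEnd ℂ (x.al i) := rfl

/-- The derivation `∂_k` with `∂_k e = i α_k`, `∂_k α_l = 0`. -/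
def dK (k : Fin N) : Kron N →ₗ[ℂ] Kron N where
  toFun x := ⟨0, 0, fun j => x.mu * Complex.I * (if j = k then 1 else 0)⟩
  map_add' := by intros; ext <;> simp <;> (try split) <;> ring
  map_smul' := by intros; ext <;> simp <;> (try split) <;> ring

/-- The derivation `∂_k^l` with `∂_k^l e = 0`, `∂_k^l α_j = δ_j^l α_k`. -/
def dKK (k l : Fin N) : Kron N →ₗ[ℂ] Kron N where
  toFun x := ⟨0, 0, fun j => x.al l * (if j = k then 1 else 0)⟩
  map_add' := by intros; ext <;> simp <;> (try split) <;> ring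
  map_smul' := by intros; ext <;> simp <;> (try split) <;> ring

end Kron


lemma Kron.sum_lam {N : ℕ} {ι : Type*} (s : Finset ι) (f : ι → Kron N) :
    (∑ i ∈ s, f i).lam = ∑ i ∈ s, (f i).lam := by
  induction s using Finset.cons_induction with
  | empty => simp
  | cons a s ha ih => simp [Finset.sum_cons, ih]

lemma Kron.sum_mu {N : ℕ} {ι : Type*} (s : Finset ι) (f : ι → Kron N) :
    (∑ i ∈ s, f i).mu = ∑ i ∈ s, (f i).mu := by
  induction s using Finset.cons_induction with
  | empty => simp
  | cons a s ha ih => simp [Finset.sum_cons, ih]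

lemma Kron.sum_al {N : ℕ} {ι : Type*} (s : Finset ι) (f : ι → Kron N) (j : Fin N) :
    (∑ i ∈ s, f i).al j = ∑ i ∈ s, (f i).al j := by
  induction s using Finset.cons_induction with
  | empty => simp
  | cons a s ha ih => simp [Finset.sum_cons, ih]

/-- the value of a trace on `a*a`. -/
theorem stmt_11 (N : ℕ) (t0 t1 : ℝ) (τ : Kron N →ₗ[ℂ] ℂ)
    (h1 : τ 1 = (t0 : ℂ))
    (he : τ Kron.e = (t0 : ℂ) / 2 + (t1 : ℂ) * Complex.I)
    (hα : ∀ i, τ (Kron.α i) = 0)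
    (l m : ℂ) (v : Fin N → ℂ) (a : Kron N)
    (ha : a = l • (1 : Kron N) + m • Kron.e + ∑ i, v i • Kron.α i) :
    τ (star a * a) =
      (((‖l‖ ^ 2 + (l * starRingEnd ℂ m).re) * t0
        + 2 * (l * starRingEnd ℂ m).im * t1 : ℝ) : ℂ) := by
  have hdec : ∀ x : Kron N, x = x.lam • (1 : Kron N) + x.mu • Kron.e + ∑ i, x.al i • Kron.α i := by
    intro x
    ext j <;> simp [Kron.sum_lam, Kron.sum_mu, Kron.sum_al, Finset.sum_ite_eq', mul_comm]
  have hτ : ∀ x : Kron N, τ x = x.lam * (t0 : ℂ) + x.mu * ((t0 : ℂ) / 2 + (t1 : ℂ) * Complex.I) := by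
    intro x
    conv_lhs => rw [hdec x]
    simp [map_add, map_smul, map_sum, h1, he, hα]
  rw [hτ]
  have hl : a.lam = l := by rw [ha]; simp [Kron.sum_lam]
  have hm : a.mu = m := by rw [ha]; simp [Kron.sum_mu]
  rw [Kron.mul_lam, Kron.mul_mu, Kron.star_lam, Kron.star_mu, hl, hm]
  rw [show ‖l‖ ^ 2 = l.re ^ 2 + l.im ^ 2 from by rw [Complex.sq_norm, Complex.normSq_apply]; ring]
  simp only [Complex.ext_iff]
  push_cast
  simp [Complex.add_re, Complex.add_im, Complex.mul_re, Complex.mul_im, Complex.sq_norm,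
    Complex.normSq_apply, ← Complex.ofReal_pow]
  constructor <;> ring
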